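/- Let n ≥ 2, let t = (t₁ ≤ ⋯ ≤ tₙ) ∈ I^n_≤ and 1 ≤ i ≤ n, and let t' ∈ I^{n−1}_≤ be the tuple obtained from t by deleting the i-th entry. If ℙ_t is the unique Borel probability measure on Eⁿ with ∫ f₁(x₁)⋯fₙ(xₙ) dℙ_t = 𝒮_{f₁,…,fₙ}(t) for all fⱼ ∈ C(E,ℂ), and ℙ_{t'} is the analogous measure on E^{n−1} for t', then the pushforward of ℙ_t under the map Eⁿ → E^{n−1} that deletes the i-th coordinate equals ℙ_{t'}. -/

import Mathlib

open MeasureTheory ComplexConjugate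
open scoped NNReal

section Aux

variable {E : Type} [TopologicalSpace E]

/-- The product function `x ↦ ∏ j, f j (x j)` as a continuous map. -/
noncomputable def piProdCM {n : ℕ} (f : Fin n → C(E, ℂ)) : C((Fin n → E), ℂ) :=
  ∏ j, (f j).comp ⟨fun x => x j, continuous_apply j⟩

lemma piProdCM_apply {n : ℕ} (f : Fin n → C(E, ℂ)) (x : Fin n → E) :
    piProdCM f x = ∏ j, f j (x j) := by
  simp [piProdCM]

lemma piProdCM_mul {n : ℕ} (f g : Fin n → C(E, ℂ)) :
    piProdCM f * piProdCM g = piProdCM (fun j => f j * g j) := by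
  ext x
  simp [piProdCM_apply, Finset.prod_mul_distrib]

lemma piProdCM_star {n : ℕ} (f : Fin n → C(E, ℂ)) :
    star (piProdCM f) = piProdCM (fun j => star (f j)) := by
  ext x
  simp only [ContinuousMap.star_apply, piProdCM_apply]
  rw [star_prod]

lemma piProdCM_one {n : ℕ} : piProdCM (E := E) (n := n) (fun _ => 1) = 1 := by
  ext x
  simp [piProdCM_apply]

/-- The star subalgebra of `C(Fin n → E, ℂ)` spanned by products of coordinatewise
continuous functions. -/
noncomputable def prodStarAlg (E : Type) [TopologicalSpace E] (n : ℕ) :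
    StarSubalgebra ℂ C((Fin n → E), ℂ) where
  toSubalgebra := (Submodule.span ℂ (Set.range (piProdCM (E := E) (n := n)))).toSubalgebra
    (Submodule.subset_span ⟨fun _ => 1, piProdCM_one⟩)
    (by
      intro a b ha hb
      have h1 : a * b ∈ Submodule.span ℂ (Set.range (piProdCM (E := E) (n := n))) *
          Submodule.span ℂ (Set.range (piProdCM (E := E) (n := n))) :=
        Submodule.mul_mem_mul ha hb
      rw [Submodule.span_mul_span] at h1
      refine Submodule.span_le.mpr ?_ h1
      rintro c ⟨u, ⟨fu, rfl⟩, v, ⟨fv, rfl⟩, rfl⟩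
      show piProdCM fu * piProdCM fv ∈ _
      rw [piProdCM_mul]
      exact Submodule.subset_span ⟨_, rfl⟩)
  star_mem' := by
    intro a ha
    induction ha using Submodule.span_induction with
    | mem g hg =>
      obtain ⟨f, rfl⟩ := hg
      rw [piProdCM_star]
      exact Submodule.subset_span ⟨_, rfl⟩
    | zero => simpa using Submodule.zero_mem _
    | add x y _ _ hx hy => rw [star_add]; exact Submodule.add_mem _ hx hy
    | smul c x _ hx => rw [star_smul]; exact Submodule.smul_mem _ _ hx

lemma prodStarAlg_separates [CompactSpace E] [T2Space E] (n : ℕ) :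
    (prodStarAlg E n).SeparatesPoints := by
  intro x y hxy
  obtain ⟨j, hj⟩ : ∃ j, x j ≠ y j := by
    by_contra h
    push_neg at h
    exact hxy (funext h)
  obtain ⟨f, hf0, hf1, -⟩ := exists_continuous_zero_one_of_isClosed
    (isClosed_singleton (x := x j)) (isClosed_singleton (x := y j))
    (Set.disjoint_singleton.mpr hj)
  set fC : C(E, ℂ) := ⟨fun e => ((f e : ℝ) : ℂ), Complex.continuous_ofReal.comp f.continuous⟩
  set g : Fin n → C(E, ℂ) := fun k => if k = j then fC else 1
  have hgmem : piProdCM g ∈ prodStarAlg E n := Submodule.subset_span ⟨g, rfl⟩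
  refine ⟨_, ⟨piProdCM g, hgmem, rfl⟩, ?_⟩
  have hx : piProdCM g x = 0 := by
    rw [piProdCM_apply]
    refine Finset.prod_eq_zero (Finset.mem_univ j) ?_
    simp [g, fC, hf0 rfl]
  have hy : piProdCM g y = 1 := by
    rw [piProdCM_apply]
    refine Finset.prod_eq_one fun k _ => ?_
    by_cases hk : k = j
    · subst hk; simp [g, fC, hf1 rfl]
    · simp [g, hk]
  have : (piProdCM g) x ≠ (piProdCM g) y := by rw [hx, hy]; exact zero_ne_one
  exact this

lemma integrableCM {X : Type} [TopologicalSpace X] [CompactSpace X] [MeasurableSpace X]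
    [OpensMeasurableSpace X] [SecondCountableTopology X] (g : C(X, ℂ)) (μ : Measure X)
    [IsFiniteMeasure μ] : Integrable g μ := by
  exact (BoundedContinuousFunction.mkOfCompact g).integrable μ

lemma continuous_integralCM {X : Type} [TopologicalSpace X] [CompactSpace X] [MeasurableSpace X]
    [OpensMeasurableSpace X] [SecondCountableTopology X] (μ : Measure X)
    [IsProbabilityMeasure μ] : Continuous fun g : C(X, ℂ) => ∫ x, g x ∂μ := by
  refine (LipschitzWith.continuous (K := 1) ?_)
  rw [lipschitzWith_iff_dist_le_mul]
  intro g1 g2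
  rw [dist_eq_norm, dist_eq_norm, ← integral_sub (integrableCM g1 μ) (integrableCM g2 μ)]
  have hb : ∀ᵐ x ∂μ, ‖g1 x - g2 x‖ ≤ ‖g1 - g2‖ := by
    refine Filter.Eventually.of_forall fun x => ?_
    simpa [ContinuousMap.sub_apply] using (g1 - g2).norm_coe_le_norm x
  have := norm_integral_le_of_norm_le_const (μ := μ) hb
  simpa using this

/-- Two Borel probability measures on `Fin n → E` with equal product moments coincide. -/
lemma measure_ext_of_prodMoments [CompactSpace E] [T2Space E]
    [SecondCountableTopology E] [MeasurableSpace E] [BorelSpace E]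
    {n : ℕ} (μ ν : Measure (Fin n → E))
    [IsProbabilityMeasure μ] [IsProbabilityMeasure ν]
    (h : ∀ f : Fin n → C(E, ℂ), ∫ x, ∏ j, f j (x j) ∂μ = ∫ x, ∏ j, f j (x j) ∂ν) : μ = ν := by
  have key : ∀ g : C((Fin n → E), ℂ), ∫ x, g x ∂μ = ∫ x, g x ∂ν := by
    have hK : IsClosed {g : C((Fin n → E), ℂ) | ∫ x, g x ∂μ = ∫ x, g x ∂ν} :=
      isClosed_eq (continuous_integralCM μ) (continuous_integralCM ν)
    have hA : ∀ a, a ∈ Submodule.span ℂ (Set.range (piProdCM (E := E) (n := n))) →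
        ∫ x, a x ∂μ = ∫ x, a x ∂ν := by
      intro a ha
      induction ha using Submodule.span_induction with
      | mem g hg =>
        obtain ⟨f, rfl⟩ := hg
        simpa only [piProdCM_apply] using h f
      | zero => simp
      | add x y _ _ hx hy =>
        simp only [ContinuousMap.add_apply]
        rw [integral_add (integrableCM x μ) (integrableCM y μ),
          integral_add (integrableCM x ν) (integrableCM y ν), hx, hy]
      | smul c x _ hx =>
        simp only [ContinuousMap.smul_apply]
        rw [integral_smul, integral_smul, hx]
    have hdense : (prodStarAlg E n).topologicalClosure = ⊤ :=
      ContinuousMap.starSubalgebra_topologicalClosure_eq_top_of_separatesPoints _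
        (prodStarAlg_separates n)
    intro g
    have hg : g ∈ closure ((prodStarAlg E n) : Set C((Fin n → E), ℂ)) := by
      have : g ∈ (prodStarAlg E n).topologicalClosure := hdense ▸ trivial
      exact this
    exact (hK.closure_subset_iff.mpr fun a ha => hA a ha) hg
  refine ext_of_forall_lintegral_eq_of_IsFiniteMeasure ?_
  intro f
  have hcont : Continuous fun x : Fin n → E => (f x : ℝ) :=
    NNReal.continuous_coe.comp f.continuous
  set gR : C((Fin n → E), ℝ) := ⟨fun x => (f x : ℝ), hcont⟩
  set g : C((Fin n → E), ℂ) := ⟨fun x => (RCLike.ofReal (K := ℂ) (f x : ℝ)),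
    RCLike.continuous_ofReal.comp hcont⟩
  have h1 := key g
  simp only [g, ContinuousMap.coe_mk] at h1
  rw [integral_ofReal, integral_ofReal] at h1
  have h2 : ∫ x, (f x : ℝ) ∂μ = ∫ x, (f x : ℝ) ∂ν := by
    exact_mod_cast h1
  have hiμ : Integrable (fun x => ((f x : ℝ≥0) : ℝ)) μ := by
    exact (BoundedContinuousFunction.mkOfCompact gR).integrable μ
  have hiν : Integrable (fun x => ((f x : ℝ≥0) : ℝ)) ν := by
    exact (BoundedContinuousFunction.mkOfCompact gR).integrable ν
  rw [lintegral_coe_eq_integral _ hiμ, lintegral_coe_eq_integral _ hiν, h2]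

end Aux

theorem stmt_2
    (E : Type) [TopologicalSpace E] [CompactSpace E] [T2Space E]
    [SecondCountableTopology E] [MeasurableSpace E] [BorelSpace E]
    (I : Set ℝ) (hI : I.OrdConnected)
    (S : ∀ n : ℕ, (Fin n → C(E, ℂ)) → (Fin n → ℝ) → ℂ)
    (hScont : ∀ (n : ℕ) (f : Fin n → C(E, ℂ)),
      ContinuousOn (S n f) {t : Fin n → ℝ | (∀ i, t i ∈ I) ∧ Monotone t})
    (hSlin : ∀ (n : ℕ) (t : Fin n → ℝ), (∀ i, t i ∈ I) → Monotone t →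
      ∀ (f : Fin n → C(E, ℂ)) (i : Fin n) (c : ℂ) (g h : C(E, ℂ)),
        S n (Function.update f i (c • g + h)) t
          = c * S n (Function.update f i g) t + S n (Function.update f i h) t)
    (hSbdd : ∀ (n : ℕ) (t : Fin n → ℝ), (∀ i, t i ∈ I) → Monotone t →
      ∃ C > 0, ∀ f : Fin n → C(E, ℂ), ‖S n f t‖ ≤ C * ∏ i, ‖f i‖)
    (hScons : ∀ (n : ℕ) (t : Fin (n + 1) → ℝ), (∀ i, t i ∈ I) → Monotone t →
      ∀ (f : Fin (n + 1) → C(E, ℂ)) (i : Fin (n + 1)), f i = 1 →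
        S (n + 1) f t = S n (f ∘ i.succAbove) (t ∘ i.succAbove))
    (hSnorm : ∀ t : Fin 1 → ℝ, (∀ i, t i ∈ I) → S 1 (fun _ => 1) t = 1)
    (hSpos : ∀ (n : ℕ) (t : Fin n → ℝ), (∀ i, t i ∈ I) → Monotone t →
      ∀ f : Fin n → C(E, ℂ), (∀ i x, (f i x).im = 0 ∧ 0 ≤ (f i x).re) →
        0 ≤ (S n f t).re ∧ (S n f t).im = 0) :
    ∀ n : ℕ, 1 ≤ n → ∀ t : Fin (n + 1) → ℝ, (∀ i, t i ∈ I) → Monotone t →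
      ∀ i : Fin (n + 1),
      ∀ (μ : Measure (Fin (n + 1) → E)) (ν : Measure (Fin n → E)),
        IsProbabilityMeasure μ → IsProbabilityMeasure ν →
        (∀ f : Fin (n + 1) → C(E, ℂ), ∫ x, ∏ j, f j (x j) ∂μ = S (n + 1) f t) →
        (∀ f : Fin n → C(E, ℂ),
          ∫ x, ∏ j, f j (x j) ∂ν = S n f (t ∘ i.succAbove)) →
        Measure.map (fun (x : Fin (n + 1) → E) => x ∘ i.succAbove) μ = ν := by
  intro n hn t ht hmono i μ ν hμP hνP hμ hν
  have hmeas : Measurable fun x : Fin (n + 1) → E => x ∘ i.succAbove :=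
    measurable_pi_lambda _ fun j => measurable_pi_apply _
  haveI : IsProbabilityMeasure (Measure.map (fun x : Fin (n + 1) → E => x ∘ i.succAbove) μ) :=
    Measure.isProbabilityMeasure_map hmeas.aemeasurable
  refine measure_ext_of_prodMoments _ _ ?_
  intro f
  have hcontf : Continuous fun y : Fin n → E => ∏ j, f j (y j) :=
    continuous_finset_prod _ fun j _ => (f j).continuous.comp (continuous_apply j)
  rw [integral_map hmeas.aemeasurable hcontf.aestronglyMeasurable]
  set F : Fin (n + 1) → C(E, ℂ) := i.insertNth 1 f with hF
  have hFi : F i = 1 := by rw [hF]; simp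
  have hFs : ∀ j, F (i.succAbove j) = f j := by
    intro j; rw [hF]; simp
  have hprod : ∀ x : Fin (n + 1) → E, ∏ j, f j ((x ∘ i.succAbove) j) = ∏ j, F j (x j) := by
    intro x
    rw [Fin.prod_univ_succAbove (fun j => F j (x j)) i, hFi]
    simp only [ContinuousMap.one_apply, one_mul, Function.comp_apply]
    exact Finset.prod_congr rfl fun j _ => by rw [hFs j]
  calc ∫ x, ∏ j, f j ((x ∘ i.succAbove) j) ∂μ
      = ∫ x, ∏ j, F j (x j) ∂μ := by simp_rw [hprod]
    _ = S (n + 1) F t := hμ F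
    _ = S n (F ∘ i.succAbove) (t ∘ i.succAbove) := hScons n t ht hmono F i hFi
    _ = S n f (t ∘ i.succAbove) := by
        congr 1
        exact funext fun j => hFs j
    _ = ∫ x, ∏ j, f j (x j) ∂ν := (hν f).symm
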